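/- Let X be a locally compact Hausdorff space and k : X × X → [0,∞] a lower semicontinuous symmetric kernel. For any H, L ⊆ X, the dual Chebyshev constant coincides with the restricted quasi-uniform energy and the Chebyshev constant coincides with the restricted dual energy: inf_{n≥1} M̄_n(H,L) = q^#(H,L) and sup_{n≥1} M_n(H,L) = q̲^#(H,L). -/

import Mathlib

open MeasureTheory Set ENNReal Filter

variable {X : Type*}

/-- The potential `U^μ(x) = ∫ k(x,y) dμ(y)` of a measure `μ` with respect to the kernel `k`. -/
noncomputable def potential [MeasurableSpace X] (k : X → X → ℝ≥0∞) (μ : Measure X) (x : X) :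
    ℝ≥0∞ :=
  ∫⁻ y, k x y ∂μ

/-- `M1 H` : the regular Borel probability measures concentrated on `H`
(i.e. with outer measure of `H` equal to `1`). -/
def M1 [TopologicalSpace X] [MeasurableSpace X] (H : Set X) : Set (Measure X) :=
  {μ | IsProbabilityMeasure μ ∧ μ.Regular ∧ μ H = 1}

/-- `M1sharp H` : finite convex combinations of Dirac measures at points of `H`. -/
def M1sharp [MeasurableSpace X] (H : Set X) : Set (Measure X) :=
  {μ | ∃ (n : ℕ) (w : Fin n → X) (α : Fin n → ℝ≥0∞),
    (∀ j, w j ∈ H) ∧ (∑ j, α j = 1) ∧ μ = ∑ j, α j • Measure.dirac (w j)}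

/-- The quasi-uniform energy `q(H,L)`. -/
noncomputable def qEnergy [TopologicalSpace X] [MeasurableSpace X] (k : X → X → ℝ≥0∞)
    (H L : Set X) : ℝ≥0∞ :=
  ⨅ μ ∈ M1 H, ⨆ x ∈ L, potential k μ x

/-- The restricted quasi-uniform energy `q^#(H,L)`. -/
noncomputable def qEnergySharp [MeasurableSpace X] (k : X → X → ℝ≥0∞) (H L : Set X) : ℝ≥0∞ :=
  ⨅ μ ∈ M1sharp H, ⨆ x ∈ L, potential k μ x

/-- The dual energy `q̲(H,L)`. -/
noncomputable def qEnergyLow [TopologicalSpace X] [MeasurableSpace X] (k : X → X → ℝ≥0∞)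
    (H L : Set X) : ℝ≥0∞ :=
  ⨆ μ ∈ M1 H, ⨅ x ∈ L, potential k μ x

/-- The restricted dual energy `q̲^#(H,L)`. -/
noncomputable def qEnergyLowSharp [MeasurableSpace X] (k : X → X → ℝ≥0∞) (H L : Set X) : ℝ≥0∞ :=
  ⨆ μ ∈ M1sharp H, ⨅ x ∈ L, potential k μ x

/-- The `n`-th Chebyshev constant `M_n(H,L)`. -/
noncomputable def chebM (k : X → X → ℝ≥0∞) (H L : Set X) (n : ℕ) : ℝ≥0∞ :=
  ⨆ (w : Fin n → X) (_ : ∀ j, w j ∈ H), ⨅ x ∈ L, (∑ j, k x (w j)) / (n : ℝ≥0∞)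

/-- The `n`-th dual Chebyshev constant `M̄_n(H,L)`. -/
noncomputable def chebMbar (k : X → X → ℝ≥0∞) (H L : Set X) (n : ℕ) : ℝ≥0∞ :=
  ⨅ (w : Fin n → X) (_ : ∀ j, w j ∈ H), ⨆ x ∈ L, (∑ j, k x (w j)) / (n : ℝ≥0∞)

/-- The `n`-th diameter `D_n(H)`. -/
noncomputable def diamN (k : X → X → ℝ≥0∞) (H : Set X) (n : ℕ) : ℝ≥0∞ :=
  ⨅ (w : Fin n → X) (_ : ∀ j, w j ∈ H),
    (2 * ∑ p ∈ Finset.univ.filter (fun p : Fin n × Fin n => p.1 < p.2), k (w p.1) (w p.2)) /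
      ((n : ℝ≥0∞) * ((n : ℝ≥0∞) - 1))

/-- The `n`-th rendezvous set `R_n(H,L)`. -/
noncomputable def rendezvousN (k : X → X → ℝ≥0∞) (H L : Set X) (n : ℕ) : Set ℝ≥0∞ :=
  ⋂ (w : Fin n → X) (_ : ∀ j, w j ∈ H),
    Icc (⨅ x ∈ L, (∑ j, k x (w j)) / (n : ℝ≥0∞)) (⨆ x ∈ L, (∑ j, k x (w j)) / (n : ℝ≥0∞))

/-- The rendezvous set `R(H,L) = ⋂_{n ≥ 1} R_n(H,L)`. -/
noncomputable def rendezvous (k : X → X → ℝ≥0∞) (H L : Set X) : Set ℝ≥0∞ :=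
  ⋂ n : ℕ, rendezvousN k H L (n + 1)

/-- The average set `A(H,L)`. -/
noncomputable def averageSet [TopologicalSpace X] [MeasurableSpace X] (k : X → X → ℝ≥0∞)
    (H L : Set X) : Set ℝ≥0∞ :=
  ⋂ μ ∈ M1 H, Icc (⨅ x ∈ L, potential k μ x) (⨆ x ∈ L, potential k μ x)


namespace ChebSharpAux

open NNReal

/-- Limit argument: if `A ≤ (1+ε) B` for all positive `ε`, then `A ≤ B`. -/
lemma le_of_forall_one_add_mul {A B : ℝ≥0∞} (h : ∀ ε : ℝ≥0, 0 < ε → A ≤ (1 + ε) * B) :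
    A ≤ B := by
  rcases eq_or_ne B ⊤ with rfl | hBt
  · exact le_top
  rcases eq_or_ne B 0 with rfl | hB0
  · simpa using h 1 one_pos
  refine ENNReal.le_of_forall_pos_le_add fun δ hδ _ => ?_
  set b := B.toNNReal with hbdef
  have hb : B = (b : ℝ≥0∞) := (ENNReal.coe_toNNReal hBt).symm
  have hb0 : b ≠ 0 := fun h0 => hB0 (by rw [hb, h0, ENNReal.coe_zero])
  have hpos : 0 < δ / b := div_pos hδ (zero_lt_iff.mpr hb0)
  calc A ≤ (1 + ↑(δ / b)) * B := h (δ / b) hpos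
    _ = B + (↑(δ / b) : ℝ≥0∞) * B := by rw [add_mul, one_mul]
    _ = B + ↑δ := by rw [hb, ← ENNReal.coe_mul, div_mul_cancel₀ _ hb0]

/-- The potential of a finite convex combination of Dirac measures. -/
lemma potential_sharp {X : Type*} [TopologicalSpace X] [T2Space X] [MeasurableSpace X]
    [BorelSpace X] (k : X → X → ℝ≥0∞) {n : ℕ} (w : Fin n → X) (α : Fin n → ℝ≥0∞) (x : X) :
    potential k (∑ j, α j • MeasureTheory.Measure.dirac (w j)) x = ∑ j, α j * k x (w j) := by
  simp [potential, MeasureTheory.lintegral_finset_sum_measure,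
    MeasureTheory.lintegral_smul_measure, MeasureTheory.lintegral_dirac]

/-- The uniform measure on an `(n+1)`-tuple from `H` belongs to `M1sharp H`. -/
lemma uniform_mem {X : Type*} [MeasurableSpace X] {H : Set X} {n : ℕ}
    (w : Fin (n + 1) → X) (hw : ∀ j, w j ∈ H) :
    (∑ j, (((n + 1 : ℕ) : ℝ≥0∞))⁻¹ • MeasureTheory.Measure.dirac (w j)) ∈ M1sharp H := by
  refine ⟨n + 1, w, fun _ => (((n + 1 : ℕ) : ℝ≥0∞))⁻¹, hw, ?_, rfl⟩
  rw [Finset.sum_const, Finset.card_univ, Fintype.card_fin, nsmul_eq_mul]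
  exact ENNReal.mul_inv_cancel (by exact_mod_cast Nat.succ_ne_zero n) (ENNReal.natCast_ne_top _)

/-- Potential of a uniform measure equals the average. -/
lemma potential_uniform {X : Type*} [TopologicalSpace X] [T2Space X] [MeasurableSpace X]
    [BorelSpace X] (k : X → X → ℝ≥0∞) {n : ℕ} (w : Fin (n + 1) → X) (x : X) :
    potential k (∑ j, (((n + 1 : ℕ) : ℝ≥0∞))⁻¹ • MeasureTheory.Measure.dirac (w j)) x
      = (∑ j, k x (w j)) / ((n + 1 : ℕ) : ℝ≥0∞) := by
  rw [potential_sharp, div_eq_mul_inv, Finset.sum_mul]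
  exact Finset.sum_congr rfl fun j _ => mul_comm _ _

/-- Sum over the indices of a list. -/
lemma sum_get {X : Type*} (f : X → ℝ≥0∞) (l : List X) :
    ∑ i : Fin l.length, f (l.get i) = (l.map f).sum := by
  conv_rhs => rw [← List.ofFn_get l]
  rw [List.map_ofFn, List.sum_ofFn]
  rfl

/-- Key approximation: any sharp measure is approximated, up to a multiplicative
factor `1+ε`, by the uniform measure on a finite tuple with repetitions. -/
lemma exists_tuple {X : Type*} (k : X → X → ℝ≥0∞) {H : Set X} {n : ℕ}
    (w : Fin n → X) (α : Fin n → ℝ≥0∞) (hw : ∀ j, w j ∈ H) (hα : ∑ j, α j = 1)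
    (ε : ℝ≥0) (hε : 0 < ε) :
    ∃ (m : ℕ) (v : Fin (m + 1) → X), (∀ i, v i ∈ H) ∧
      ∀ x : X,
        (∑ i, k x (v i)) / ((m + 1 : ℕ) : ℝ≥0∞) ≤ (1 + ε) * ∑ j, α j * k x (w j) ∧
        ∑ j, α j * k x (w j) ≤ (1 + ε) * ((∑ i, k x (v i)) / ((m + 1 : ℕ) : ℝ≥0∞)) := by
  classical
  -- real weights
  set a : Fin n → ℝ≥0 := fun j => (α j).toNNReal with ha_def
  have hαt : ∀ j, α j ≠ ⊤ := by
    intro j h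
    have h1 : α j ≤ 1 :=
      hα ▸ Finset.single_le_sum (f := α) (fun i _ => zero_le) (Finset.mem_univ j)
    rw [h] at h1
    exact (not_le.2 ENNReal.one_lt_top) (top_le_iff.mp h1 ▸ le_refl _) |>.elim
  have hαa : ∀ j, α j = (a j : ℝ≥0∞) := fun j => (ENNReal.coe_toNNReal (hαt j)).symm
  have ha1 : ∑ j, a j = 1 := by
    have h2 : ((∑ j, a j : ℝ≥0) : ℝ≥0∞) = ((1 : ℝ≥0) : ℝ≥0∞) := by
      push_cast
      rw [← hα]
      exact (Finset.sum_congr rfl fun j _ => (hαa j).symm)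
    exact_mod_cast h2
  -- the minimum positive weight
  have hex : ∃ j, a j ≠ 0 := by
    by_contra hcon
    push_neg at hcon
    simp [hcon] at ha1
  obtain ⟨j0, hj0⟩ := hex
  set S : Finset (Fin n) := Finset.univ.filter fun j => a j ≠ 0 with hS_def
  have hS : S.Nonempty := ⟨j0, by simp [hS_def, hj0]⟩
  set c : ℝ≥0 := S.inf' hS a with hc_def
  have hc0 : 0 < c := by
    rw [hc_def, Finset.lt_inf'_iff]
    intro j hj
    rw [hS_def, Finset.mem_filter] at hj
    exact zero_lt_iff.mpr hj.2
  have hcle : ∀ j, a j ≠ 0 → c ≤ a j := fun j h =>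
    Finset.inf'_le _ (by simp [hS_def, h])
  -- choose N
  obtain ⟨N, hN⟩ := exists_nat_ge (max ((ε * c)⁻¹) ((n : ℝ≥0) / ε) + 1)
  have hN1 : (1 : ℝ≥0) ≤ ε * c * N := by
    have h1 : (ε * c)⁻¹ ≤ (N : ℝ≥0) :=
      le_trans (le_add_of_le_of_nonneg (le_max_left _ _) zero_le_one) hN
    have hεc : (0 : ℝ≥0) < ε * c := mul_pos hε hc0
    calc (1 : ℝ≥0) = ε * c * (ε * c)⁻¹ := by rw [mul_inv_cancel₀ hεc.ne']
      _ ≤ ε * c * N := mul_le_mul_right h1 _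
  have hN2 : (n : ℝ≥0) ≤ ε * N := by
    have h1 : (n : ℝ≥0) / ε ≤ (N : ℝ≥0) :=
      le_trans (le_add_of_le_of_nonneg (le_max_right _ _) zero_le_one) hN
    rw [div_le_iff₀ hε] at h1
    calc (n : ℝ≥0) ≤ N * ε := h1
      _ = ε * N := mul_comm _ _
  have hN0 : (1 : ℝ≥0) ≤ (N : ℝ≥0) :=
    le_trans (le_add_self) hN
  -- the multiplicities
  set p : Fin n → ℕ := fun j => ⌈(N : ℝ≥0) * a j⌉₊ with hp_def
  have hpl : ∀ j, (N : ℝ≥0) * a j ≤ (p j : ℝ≥0) := fun j => Nat.le_ceil _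
  have hpu : ∀ j, (p j : ℝ≥0) ≤ (N : ℝ≥0) * a j + 1 :=
    fun j => (Nat.ceil_lt_add_one zero_le).le
  have hp0 : ∀ j, a j = 0 → p j = 0 := by
    intro j h
    simp [hp_def, h]
  set M : ℕ := ∑ j, p j with hM_def
  have hNM : (N : ℝ≥0) ≤ (M : ℝ≥0) := by
    have h1 : (N : ℝ≥0) = ∑ j, (N : ℝ≥0) * a j := by rw [← Finset.mul_sum, ha1, mul_one]
    rw [h1, hM_def]
    push_cast
    exact Finset.sum_le_sum fun j _ => hpl j
  have hMN : (M : ℝ≥0) ≤ (N : ℝ≥0) + n := by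
    rw [hM_def]
    push_cast
    calc ∑ j, (p j : ℝ≥0) ≤ ∑ j, ((N : ℝ≥0) * a j + 1) := Finset.sum_le_sum fun j _ => hpu j
      _ = (N : ℝ≥0) * (∑ j, a j) + n := by
          rw [Finset.sum_add_distrib, ← Finset.mul_sum]
          simp
      _ = (N : ℝ≥0) + n := by rw [ha1, mul_one]
  have hM0 : M ≠ 0 := by
    intro h
    have h2 := le_trans hN0 hNM
    rw [h] at h2
    simp at h2
  -- key inequalities on multiplicities
  have hu : ∀ j, (p j : ℝ≥0) ≤ (1 + ε) * a j * M := by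
    intro j
    rcases eq_or_ne (a j) 0 with h0 | h0
    · simp [hp0 j h0, h0]
    calc (p j : ℝ≥0) ≤ (N : ℝ≥0) * a j + 1 := hpu j
      _ ≤ (N : ℝ≥0) * a j + ε * c * N := add_le_add_right hN1 _
      _ ≤ (N : ℝ≥0) * a j + ε * a j * N :=
          add_le_add_right (mul_le_mul_left (mul_le_mul_right (hcle j h0) ε) N) _
      _ = (1 + ε) * a j * N := by ring
      _ ≤ (1 + ε) * a j * M := mul_le_mul_right hNM _
  have hl : ∀ j, a j * M ≤ (1 + ε) * p j := by
    intro j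
    calc a j * M ≤ a j * ((N : ℝ≥0) + n) := mul_le_mul_right hMN _
      _ = (N : ℝ≥0) * a j + a j * n := by ring
      _ ≤ (p j : ℝ≥0) + a j * n := add_le_add_left (hpl j) _
      _ ≤ (p j : ℝ≥0) + a j * (ε * N) := add_le_add_right (mul_le_mul_right hN2 _) _
      _ = (p j : ℝ≥0) + ε * ((N : ℝ≥0) * a j) := by ring
      _ ≤ (p j : ℝ≥0) + ε * (p j : ℝ≥0) := add_le_add_right (mul_le_mul_right (hpl j) _) _
      _ = (1 + ε) * p j := by ring
  -- the tuple, as a list with repetitions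
  set l : List X := (List.finRange n).flatMap (fun j => List.replicate (p j) (w j)) with hl_def
  have hlen : l.length = M := by
    rw [hl_def, List.length_flatMap, hM_def]
    have h3 : (List.length ∘ fun j => List.replicate (p j) (w j)) = p :=
      funext fun j => List.length_replicate
    simp only [List.length_replicate]
    rw [← List.ofFn_eq_map, List.sum_ofFn]
  have hmemH : ∀ y ∈ l, y ∈ H := by
    intro y hy
    rw [hl_def, List.mem_flatMap] at hy
    obtain ⟨j, -, hyj⟩ := hy
    rw [List.eq_of_mem_replicate hyj]
    exact hw j
  obtain ⟨m, hm⟩ : ∃ m, l.length = m + 1 := ⟨l.length - 1, by omega⟩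
  refine ⟨m, fun i => l.get (Fin.cast hm.symm i), fun i => hmemH _ (l.get_mem _), ?_⟩
  have hMm : ((m + 1 : ℕ) : ℝ≥0∞) = ((M : ℕ) : ℝ≥0∞) := by
    rw [← hm, hlen]
  have hsum : ∀ x : X,
      (∑ i : Fin (m + 1), k x (l.get (Fin.cast hm.symm i)))
        = ∑ j, ((p j : ℕ) : ℝ≥0∞) * k x (w j) := by
    intro x
    have h1 : (∑ i : Fin (m + 1), k x (l.get (Fin.cast hm.symm i)))
        = ∑ i : Fin l.length, k x (l.get i) :=
      Fintype.sum_equiv (finCongr hm.symm) _ _ (fun i => rfl)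
    rw [h1, sum_get (fun y => k x y) l, hl_def, List.map_flatMap]
    simp only [List.map_replicate]
    rw [List.flatMap, List.sum_flatten, List.map_map, ← List.ofFn_eq_map, List.sum_ofFn]
    exact Finset.sum_congr rfl fun j _ => by
      simp [List.sum_replicate, nsmul_eq_mul]
  intro x
  rw [hMm]
  have hMne : ((M : ℕ) : ℝ≥0∞) ≠ 0 := by exact_mod_cast hM0
  have hMtop : ((M : ℕ) : ℝ≥0∞) ≠ ⊤ := ENNReal.natCast_ne_top _
  constructor
  · rw [ENNReal.div_le_iff hMne hMtop, hsum x, Finset.mul_sum, Finset.sum_mul]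
    refine Finset.sum_le_sum fun j _ => ?_
    have hj : (((p j : ℕ) : ℝ≥0) : ℝ≥0∞) ≤ (((1 + ε) * a j * M : ℝ≥0) : ℝ≥0∞) :=
      ENNReal.coe_le_coe.2 (hu j)
    calc ((p j : ℕ) : ℝ≥0∞) * k x (w j)
        ≤ (((1 + ε) * a j * M : ℝ≥0) : ℝ≥0∞) * k x (w j) := by
          refine mul_le_mul_left ?_ _
          exact_mod_cast hj
      _ = (1 + (ε : ℝ≥0∞)) * (α j * k x (w j)) * ((M : ℕ) : ℝ≥0∞) := by
          rw [hαa j]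
          push_cast
          ring
  · rw [← mul_div_assoc, ENNReal.le_div_iff_mul_le (Or.inl hMne) (Or.inl hMtop), hsum x,
      Finset.sum_mul, Finset.mul_sum]
    refine Finset.sum_le_sum fun j _ => ?_
    have hj : ((a j * M : ℝ≥0) : ℝ≥0∞) ≤ (((1 + ε) * p j : ℝ≥0) : ℝ≥0∞) :=
      ENNReal.coe_le_coe.2 (hl j)
    calc α j * k x (w j) * ((M : ℕ) : ℝ≥0∞)
        = ((a j * M : ℝ≥0) : ℝ≥0∞) * k x (w j) := by
          rw [hαa j]
          push_cast
          ring
      _ ≤ (((1 + ε) * p j : ℝ≥0) : ℝ≥0∞) * k x (w j) := mul_le_mul_left hj _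
      _ = (1 + (ε : ℝ≥0∞)) * (((p j : ℕ) : ℝ≥0∞) * k x (w j)) := by
          push_cast
          ring

end ChebSharpAux

/-- `inf_{n ≥ 1} M̄_n(H,L) = q^#(H,L)` and `sup_{n ≥ 1} M_n(H,L) = q̲^#(H,L)`. -/
theorem cheb_eq_sharpEnergies
    {X : Type*} [TopologicalSpace X] [LocallyCompactSpace X] [T2Space X]
    [MeasurableSpace X] [BorelSpace X]
    (k : X → X → ℝ≥0∞)
    (hk : LowerSemicontinuous fun p : X × X => k p.1 p.2)
    (hksymm : ∀ x y, k x y = k y x)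
    (H L : Set X) :
    (⨅ n : ℕ, chebMbar k H L (n + 1)) = qEnergySharp k H L ∧
    (⨆ n : ℕ, chebM k H L (n + 1)) = qEnergyLowSharp k H L := by
  have hone : ∀ ε : NNReal, (1 + (ε : ℝ≥0∞)) ≠ 0 := fun ε => by simp
  have htop : ∀ ε : NNReal, (1 + (ε : ℝ≥0∞)) ≠ ⊤ := fun ε => by
    simp [ENNReal.add_eq_top]
  have hmul : ∀ (ε : NNReal) (g : X → ℝ≥0∞),
      (1 + (ε : ℝ≥0∞)) * ⨅ x ∈ L, g x = ⨅ x ∈ L, (1 + (ε : ℝ≥0∞)) * g x := by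
    intro ε g
    rw [ENNReal.mul_iInf_of_ne (hone ε) (htop ε)]
    exact iInf_congr fun x => ENNReal.mul_iInf_of_ne (hone ε) (htop ε)
  constructor
  · refine le_antisymm ?_ ?_
    · -- `⨅ n, M̄_{n+1} ≤ q^#`
      unfold qEnergySharp
      refine le_iInf₂ fun μ hμ => ?_
      obtain ⟨n, w, α, hw, hα, rfl⟩ := hμ
      refine ChebSharpAux.le_of_forall_one_add_mul fun ε hε => ?_
      obtain ⟨m, v, hv, hbnd⟩ := ChebSharpAux.exists_tuple k w α hw hα ε hε
      calc (⨅ n : ℕ, chebMbar k H L (n + 1)) ≤ chebMbar k H L (m + 1) := iInf_le _ m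
        _ ≤ ⨆ x ∈ L, (∑ i, k x (v i)) / ((m + 1 : ℕ) : ℝ≥0∞) := by
            unfold chebMbar
            exact iInf₂_le v hv
        _ ≤ (1 + (ε : ℝ≥0∞)) *
            ⨆ x ∈ L, potential k (∑ j, α j • MeasureTheory.Measure.dirac (w j)) x := by
            refine iSup₂_le fun x hx => (hbnd x).1.trans (mul_le_mul_right ?_ _)
            exact le_iSup₂_of_le x hx
              (le_of_eq (ChebSharpAux.potential_sharp k w α x).symm)
    · -- `q^# ≤ ⨅ n, M̄_{n+1}`
      refine le_iInf fun n => ?_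
      unfold chebMbar
      refine le_iInf₂ fun w hw => ?_
      unfold qEnergySharp
      refine iInf₂_le_of_le _ (ChebSharpAux.uniform_mem w hw) ?_
      exact le_of_eq
        (iSup_congr fun x => iSup_congr fun _ => ChebSharpAux.potential_uniform k w x)
  · refine le_antisymm ?_ ?_
    · -- `⨆ n, M_{n+1} ≤ q̲^#`
      refine iSup_le fun n => ?_
      unfold chebM
      refine iSup₂_le fun w hw => ?_
      unfold qEnergyLowSharp
      refine le_iSup₂_of_le _ (ChebSharpAux.uniform_mem w hw) ?_
      exact le_of_eq
        (iInf_congr fun x => iInf_congr fun _ => (ChebSharpAux.potential_uniform k w x).symm)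
    · -- `q̲^# ≤ ⨆ n, M_{n+1}`
      unfold qEnergyLowSharp
      refine iSup₂_le fun μ hμ => ?_
      obtain ⟨n, w, α, hw, hα, rfl⟩ := hμ
      refine ChebSharpAux.le_of_forall_one_add_mul fun ε hε => ?_
      obtain ⟨m, v, hv, hbnd⟩ := ChebSharpAux.exists_tuple k w α hw hα ε hε
      calc (⨅ x ∈ L, potential k (∑ j, α j • MeasureTheory.Measure.dirac (w j)) x)
          ≤ ⨅ x ∈ L, (1 + (ε : ℝ≥0∞)) * ((∑ i, k x (v i)) / ((m + 1 : ℕ) : ℝ≥0∞)) := by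
            refine le_iInf₂ fun x hx => ?_
            refine iInf₂_le_of_le x hx ?_
            rw [ChebSharpAux.potential_sharp]
            exact (hbnd x).2
        _ = (1 + (ε : ℝ≥0∞)) * ⨅ x ∈ L, (∑ i, k x (v i)) / ((m + 1 : ℕ) : ℝ≥0∞) :=
            (hmul ε _).symm
        _ ≤ (1 + (ε : ℝ≥0∞)) * ⨆ n : ℕ, chebM k H L (n + 1) := by
            refine mul_le_mul_right ?_ _
            refine le_iSup_of_le m ?_
            unfold chebM
            exact le_iSup₂_of_le v hv le_rfl
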